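/- Let S be a numerical semigroup admitting a pattern p = a₁x₁+⋯+aₙxₙ of admissibility degree 2, let E be a semigroup ideal of S, and set B = {i : bᵢ = 1}, r = min B, t = max B (B is nonempty). If S ⋈ᵈ E admits p eventually with respect to d, then: (1) for every 1 ≤ i ≤ t, ⌊bᵢ/2⌋ ∈ E−E; and (2) for every r ≤ i ≤ t such that bᵢ is even, bᵢ/2 ≥ c(E) − min(E). -/

import Mathlib

/-- A numerical semigroup: an additive submonoid of ℕ with finite complement. -/
def IsNumericalSemigroup (S : Set ℕ) : Prop :=
  0 ∈ S ∧ (∀ a ∈ S, ∀ b ∈ S, a + b ∈ S) ∧ Sᶜ.Finite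

/-- Evaluation of a pattern (list of coefficients a₁,…,aₙ) at s₁,…,sₙ. -/
def patEval (p : List ℤ) (s : ℕ → ℕ) : ℤ :=
  ∑ i ∈ Finset.range p.length, p.getD i 0 * (s i : ℤ)

/-- `S` admits the pattern `p`: p(s₁,…,sₙ) ∈ S for all s₁ ≥ ⋯ ≥ sₙ in S. -/
def AdmitsPat (S : Set ℕ) (p : List ℤ) : Prop :=
  ∀ s : ℕ → ℕ, (∀ i, s i ∈ S) → (∀ i j, i ≤ j → s j ≤ s i) →
    ∃ m ∈ S, (m : ℤ) = patEval p s

/-- A pattern is admissible if it is admitted by some numerical semigroup. -/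
def Admissible (p : List ℤ) : Prop :=
  ∃ S : Set ℕ, IsNumericalSemigroup S ∧ AdmitsPat S p

/-- The derivative p' of a pattern. -/
def pderiv : List ℤ → List ℤ
  | [] => []
  | a :: q => if a = 1 then q else (a - 1) :: q

/-- The admissibility degree: least k such that p⁽ᵏ⁾ is not admissible, or ∞. -/
noncomputable def adDeg (p : List ℤ) : ℕ∞ :=
  sInf ((fun m : ℕ => (m : ℕ∞)) '' {m : ℕ | ¬ Admissible (pderiv^[m] p)})

/-- The partial sum bᵢ = a₁ + ⋯ + aᵢ of the coefficients of `p`. -/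
def psum (p : List ℤ) (i : ℕ) : ℤ :=
  ∑ j ∈ Finset.range i, p.getD j 0

/-- The numerical duplication S ⋈ᵈ E = 2·S ∪ (2·E + d). -/
def numDup (S E : Set ℕ) (d : ℕ) : Set ℕ :=
  {x | ∃ s ∈ S, x = 2 * s} ∪ {x | ∃ e ∈ E, x = 2 * e + d}

/-- S ⋈ᵈ E admits p eventually with respect to d. -/
def EventuallyAdmits (S E : Set ℕ) (p : List ℤ) : Prop :=
  ∃ d' : ℕ, ∀ d : ℕ, d ∈ S → Odd d → d' ≤ d → AdmitsPat (numDup S E d) p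

/-- The relative ideal E − E = {z ∈ ℤ : z + E ⊆ E}. -/
def EmE (E : Set ℕ) : Set ℤ :=
  {z : ℤ | ∀ e ∈ E, ∃ f ∈ E, (f : ℤ) = z + (e : ℤ)}

/-- The conductor c(E) = min{x ∈ ℕ : x + ℕ ⊆ E}. -/
noncomputable def condOf (E : Set ℕ) : ℕ :=
  sInf {c : ℕ | ∀ x : ℕ, c ≤ x → x ∈ E}

/-- Suppose S admits p, ad(p) = 2, and set B = {i : bᵢ = 1}, r = min B,
t = max B. If S ⋈ᵈ E admits p eventually with respect to d, then
(1) ⌊bᵢ/2⌋ ∈ E − E for all 1 ≤ i ≤ t, and (2) for all r ≤ i ≤ t with bᵢ even,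
bᵢ/2 ≥ c(E) − min(E). -/
theorem patEval_three (p : List ℤ) (r i t : ℕ) (hri : r ≤ i) (hit : i ≤ t)
    (htl : t ≤ p.length) (A B C : ℕ) :
    patEval p (fun k => if k < r then A else if k < i then B else if k < t then C else 0) =
      psum p r * A + (psum p i - psum p r) * B + (psum p t - psum p i) * C := by
  unfold patEval psum
  rw [Finset.range_eq_Ico]
  rw [← Finset.sum_Ico_consecutive _ (Nat.zero_le t) htl]
  rw [← Finset.sum_Ico_consecutive _ (Nat.zero_le i) hit]
  rw [← Finset.sum_Ico_consecutive _ (Nat.zero_le r) hri]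
  have h4 : ∑ k ∈ Finset.Ico t p.length,
      p.getD k 0 * (((if k < r then A else if k < i then B else if k < t then C else 0) : ℕ) : ℤ) = 0 := by
    apply Finset.sum_eq_zero
    intro k hk
    rw [Finset.mem_Ico] at hk
    rw [if_neg (by omega), if_neg (by omega), if_neg (by omega)]
    simp
  have h1 : ∑ k ∈ Finset.Ico 0 r,
      p.getD k 0 * (((if k < r then A else if k < i then B else if k < t then C else 0) : ℕ) : ℤ)
      = (∑ k ∈ Finset.range r, p.getD k 0) * A := by
    rw [Finset.sum_mul, ← Finset.range_eq_Ico]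
    apply Finset.sum_congr rfl
    intro k hk
    rw [Finset.mem_range] at hk
    rw [if_pos hk]
  have h2 : ∑ k ∈ Finset.Ico r i,
      p.getD k 0 * (((if k < r then A else if k < i then B else if k < t then C else 0) : ℕ) : ℤ)
      = (∑ k ∈ Finset.range i, p.getD k 0 - ∑ k ∈ Finset.range r, p.getD k 0) * B := by
    rw [← Finset.sum_Ico_eq_sub _ hri, Finset.sum_mul]
    apply Finset.sum_congr rfl
    intro k hk
    rw [Finset.mem_Ico] at hk
    rw [if_neg (by omega), if_pos (by omega)]
  have h3 : ∑ k ∈ Finset.Ico i t,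
      p.getD k 0 * (((if k < r then A else if k < i then B else if k < t then C else 0) : ℕ) : ℤ)
      = (∑ k ∈ Finset.range t, p.getD k 0 - ∑ k ∈ Finset.range i, p.getD k 0) * C := by
    rw [← Finset.sum_Ico_eq_sub _ hit, Finset.sum_mul]
    apply Finset.sum_congr rfl
    intro k hk
    rw [Finset.mem_Ico] at hk
    rw [if_neg (by omega), if_neg (by omega), if_pos (by omega)]
  rw [h1, h2, h3, h4]
  ring

theorem stmt_16 (S E : Set ℕ) (hS : IsNumericalSemigroup S)
    (hES : E ⊆ S) (hE : ∀ e ∈ E, ∀ s ∈ S, e + s ∈ E) (hEne : E.Nonempty)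
    (p : List ℤ) (hp : ∀ a ∈ p, a ≠ 0)
    (hSp : AdmitsPat S p) (hdeg : adDeg p = 2)
    (B : Set ℕ) (hB : B = {i : ℕ | 1 ≤ i ∧ i ≤ p.length ∧ psum p i = 1})
    (hBne : B.Nonempty) (r t : ℕ) (hr : r = sInf B) (ht : t = sSup B)
    (hev : EventuallyAdmits S E p) :
    (∀ i : ℕ, 1 ≤ i → i ≤ t → (psum p i).fdiv 2 ∈ EmE E) ∧
    (∀ i : ℕ, r ≤ i → i ≤ t → Even (psum p i) →
      (condOf E : ℤ) - ((sInf E : ℕ) : ℤ) ≤ psum p i / 2) := by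
  obtain ⟨h0S, haddS, hfin⟩ := hS
  -- cofiniteness bound for S
  obtain ⟨N0, hN0⟩ := hfin.bddAbove
  have hN : ∀ x : ℕ, N0 + 1 ≤ x → x ∈ S := by
    intro x hx
    by_contra hxS
    exact absurd (hN0 hxS) (by omega)
  set N := N0 + 1 with hNdef
  obtain ⟨d', hd'⟩ := hev
  -- facts about B, r, t
  have hBbdd : BddAbove B := by
    refine ⟨p.length, fun x hx => ?_⟩
    rw [hB] at hx
    exact hx.2.1
  have htB : t ∈ B := ht ▸ Nat.sSup_mem hBne hBbdd
  have hrB : r ∈ B := hr ▸ Nat.sInf_mem hBne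
  rw [hB] at htB hrB
  have hpt : psum p t = 1 := htB.2.2
  have hpr : psum p r = 1 := hrB.2.2
  have htlen : t ≤ p.length := htB.2.1
  constructor
  · -- Part (1)
    intro i hi1 hit e he
    by_cases hbe : Even (psum p i)
    · -- even case
      obtain ⟨b2, hb2⟩ := hbe
      set D := N + d' with hD
      have hdS : (2 * D + 1) ∈ S := hN _ (by omega)
      have hadm := hd' (2 * D + 1) hdS (Nat.odd_iff.mpr (by omega)) (by omega)
      have hmemb : ∀ k : ℕ, (fun k => if k < i then 2 * e + 2 * D + 2 else
          if k < i then 2 * e + 2 * D + 1 else if k < t then 2 * e + 2 * D + 1 else 0) k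
          ∈ numDup S E (2 * D + 1) := by
        intro k
        by_cases h1 : k < i
        · simp only [if_pos h1]
          exact Or.inl ⟨e + D + 1, hN _ (by omega), by omega⟩
        · by_cases h2 : k < t
          · simp only [if_neg h1, if_pos h2]
            exact Or.inr ⟨e, he, by omega⟩
          · simp only [if_neg h1, if_neg h2]
            exact Or.inl ⟨0, h0S, by omega⟩
      have hmono : ∀ k l : ℕ, k ≤ l →
          (fun k => if k < i then 2 * e + 2 * D + 2 else
          if k < i then 2 * e + 2 * D + 1 else if k < t then 2 * e + 2 * D + 1 else 0) l ≤
          (fun k => if k < i then 2 * e + 2 * D + 2 else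
          if k < i then 2 * e + 2 * D + 1 else if k < t then 2 * e + 2 * D + 1 else 0) k := by
        intro k l hkl
        simp only
        split_ifs <;> omega
      obtain ⟨m, hm, hmeq⟩ := hadm _ hmemb hmono
      rw [patEval_three p i i t le_rfl hit htlen _ _ _, hpt] at hmeq
      have hkey : (m : ℤ) = 2 * e + 2 * D + 1 + psum p i := by
        rw [hmeq]; push_cast; ring
      rcases hm with ⟨s₀, hs₀, hms⟩ | ⟨f, hf, hmf⟩
      · exfalso; omega
      · refine ⟨f, hf, ?_⟩
        rw [Int.fdiv_eq_ediv_of_nonneg _ (by norm_num)]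
        omega
    · -- odd case
      rw [Int.not_even_iff] at hbe
      set D := N + d' with hD
      have hdS : (2 * D + 1) ∈ S := hN _ (by omega)
      have hadm := hd' (2 * D + 1) hdS (Nat.odd_iff.mpr (by omega)) (by omega)
      have hmemb : ∀ k : ℕ, (fun k => if k < i then 2 * e + 2 * D + 1 else
          if k < i then 2 * e + 2 * D else if k < t then 2 * e + 2 * D else 0) k
          ∈ numDup S E (2 * D + 1) := by
        intro k
        by_cases h1 : k < i
        · simp only [if_pos h1]
          exact Or.inr ⟨e, he, by omega⟩
        · by_cases h2 : k < t
          · simp only [if_neg h1, if_pos h2]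
            exact Or.inl ⟨e + D, hN _ (by omega), by omega⟩
          · simp only [if_neg h1, if_neg h2]
            exact Or.inl ⟨0, h0S, by omega⟩
      have hmono : ∀ k l : ℕ, k ≤ l →
          (fun k => if k < i then 2 * e + 2 * D + 1 else
          if k < i then 2 * e + 2 * D else if k < t then 2 * e + 2 * D else 0) l ≤
          (fun k => if k < i then 2 * e + 2 * D + 1 else
          if k < i then 2 * e + 2 * D else if k < t then 2 * e + 2 * D else 0) k := by
        intro k l hkl
        simp only
        split_ifs <;> omega
      obtain ⟨m, hm, hmeq⟩ := hadm _ hmemb hmono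
      rw [patEval_three p i i t le_rfl hit htlen _ _ _, hpt] at hmeq
      have hkey : (m : ℤ) = 2 * e + 2 * D + psum p i := by
        rw [hmeq]; push_cast; ring
      rcases hm with ⟨s₀, hs₀, hms⟩ | ⟨f, hf, hmf⟩
      · exfalso; omega
      · refine ⟨f, hf, ?_⟩
        rw [Int.fdiv_eq_ediv_of_nonneg _ (by norm_num)]
        omega
  · -- Part (2)
    intro i hri hit hbe
    obtain ⟨b2, hb2⟩ := hbe
    have hεE : sInf E ∈ E := Nat.sInf_mem hEne
    set ε := sInf E with hε
    have key : ∀ c : ℕ, ε + 1 ≤ c → ∃ f ∈ E, (f : ℤ) = (c : ℤ) + b2 - 1 := by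
      intro c hc
      set D := N + d' with hD
      have hdS : (2 * D + 1) ∈ S := hN _ (by omega)
      have hadm := hd' (2 * D + 1) hdS (Nat.odd_iff.mpr (by omega)) (by omega)
      have hmemb : ∀ k : ℕ, (fun k => if k < r then 2 * c + 2 * D else
          if k < i then 2 * ε + 2 * D + 1 else if k < t then 2 * ε + 2 * D else 0) k
          ∈ numDup S E (2 * D + 1) := by
        intro k
        by_cases h1 : k < r
        · simp only [if_pos h1]
          exact Or.inl ⟨c + D, hN _ (by omega), by omega⟩
        · by_cases h2 : k < i
          · simp only [if_neg h1, if_pos h2]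
            exact Or.inr ⟨ε, hεE, by omega⟩
          · by_cases h3 : k < t
            · simp only [if_neg h1, if_neg h2, if_pos h3]
              exact Or.inl ⟨ε + D, hN _ (by omega), by omega⟩
            · simp only [if_neg h1, if_neg h2, if_neg h3]
              exact Or.inl ⟨0, h0S, by omega⟩
      have hmono : ∀ k l : ℕ, k ≤ l →
          (fun k => if k < r then 2 * c + 2 * D else
          if k < i then 2 * ε + 2 * D + 1 else if k < t then 2 * ε + 2 * D else 0) l ≤
          (fun k => if k < r then 2 * c + 2 * D else
          if k < i then 2 * ε + 2 * D + 1 else if k < t then 2 * ε + 2 * D else 0) k := by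
        intro k l hkl
        simp only
        split_ifs <;> omega
      obtain ⟨m, hm, hmeq⟩ := hadm _ hmemb hmono
      rw [patEval_three p r i t hri hit htlen _ _ _, hpt, hpr] at hmeq
      have hkey : (m : ℤ) = 2 * c + 2 * D + psum p i - 1 := by
        rw [hmeq]; push_cast; ring
      rcases hm with ⟨s₀, hs₀, hms⟩ | ⟨f, hf, hmf⟩
      · exfalso; omega
      · exact ⟨f, hf, by omega⟩
    have hnn : 0 ≤ (ε : ℤ) + b2 := by
      obtain ⟨f, hf, hfe⟩ := key (ε + 1) le_rfl
      omega
    have hub : ∀ x : ℕ, (ε : ℤ) + b2 ≤ x → x ∈ E := by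
      intro x hx
      have hcnn : (0 : ℤ) ≤ (x : ℤ) + 1 - b2 := by omega
      have hcz : ((((x : ℤ) + 1 - b2).toNat : ℕ) : ℤ) = (x : ℤ) + 1 - b2 :=
        Int.toNat_of_nonneg hcnn
      obtain ⟨f, hf, hfe⟩ := key ((x : ℤ) + 1 - b2).toNat (by omega)
      have : f = x := by omega
      exact this ▸ hf
    have hKz : ((((ε : ℤ) + b2).toNat : ℕ) : ℤ) = (ε : ℤ) + b2 := Int.toNat_of_nonneg hnn
    have hcond : condOf E ≤ ((ε : ℤ) + b2).toNat := by
      apply Nat.sInf_le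
      intro x hx
      apply hub
      omega
    have hcond' : (condOf E : ℤ) ≤ (((ε : ℤ) + b2).toNat : ℤ) := by exact_mod_cast hcond
    omega
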